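/- Let A = φ_{W1}⋯φ_{Wn} ∈ Φ* be admissible. If for some index ℓ with 1 < ℓ ≤ n the word W_{ℓ-1} decomposes as W_{ℓ-1} = W′W″ with W″W_ℓ ∈ B, then lp(W″) ≤ 1. Symmetrically, if W_ℓ = W′W″ with W_{ℓ-1}W′ ∈ B, then lp(W′) ≤ 1. -/

import Mathlib

/-- `P` is a piece for the presentation with defining words `R`: it occurs as a
subword of defining words in two essentially different ways. -/
def IsPiece {X : Type*} (R : Set (List X)) (P : List X) : Prop :=
  ∃ W₁ ∈ R, ∃ W₂ ∈ R, ∃ U₁ U₂ V₁ V₂ : List X,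
    W₁ = U₁ ++ P ++ U₂ ∧ W₂ = V₁ ++ P ++ V₂ ∧ (U₁ ≠ V₁ ∨ U₂ ≠ V₂)

/-- The piece-length `lp W`: the minimal number `k` such that `W` decomposes as a
concatenation of `k` pieces; `0` for the empty word, `⊤` if no decomposition exists. -/
noncomputable def pieceLength {X : Type*} (R : Set (List X)) (W : List X) : ℕ∞ :=
  sInf {n : ℕ∞ | ∃ l : List (List X),
    (∀ P ∈ l, IsPiece R P) ∧ l.flatten = W ∧ (l.length : ℕ∞) = n}

/-- The set of defining words of a presentation given by a set of relations. -/
def defWords {X : Type*} (Rel : Set (List X × List X)) : Set (List X) :=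
  {W | ∃ p ∈ Rel, W = p.1 ∨ W = p.2}

/-- The `K₃²` condition: (a) the two sides of each relation start with different
generators and end with different generators; (b) every defining word has
piece-length at least 3; (c) the words of any two distinct defining relations are
pairwise distinct (and the two sides of each relation are distinct). -/
def K32 {X : Type*} (Rel : Set (List X × List X)) : Prop :=
  (∀ p ∈ Rel, p.1.head? ≠ p.2.head? ∧ p.1.getLast? ≠ p.2.getLast?) ∧
  (∀ W ∈ defWords Rel, 3 ≤ pieceLength (defWords Rel) W) ∧
  (∀ p ∈ Rel, p.1 ≠ p.2) ∧
  (∀ p ∈ Rel, ∀ q ∈ Rel, p ≠ q →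
    p.1 ≠ q.1 ∧ p.1 ≠ q.2 ∧ p.2 ≠ q.1 ∧ p.2 ≠ q.2)

/-- The standard padding map `δ_X` on pairs of words. -/
def pad {X : Type*} : List X → List X → List (Option X × Option X)
  | [], [] => []
  | [], y :: ys => (none, some y) :: pad [] ys
  | x :: xs, [] => (some x, none) :: pad xs []
  | x :: xs, y :: ys => (some x, some y) :: pad xs ys
  termination_by a b => a.length + b.length

/-- The relators of the co-presented group of the semigroup presentation `Rel`. -/
def relators {X : Type*} (Rel : Set (List X × List X)) : Set (FreeGroup X) :=
  {g | ∃ p ∈ Rel, g = (p.1.map FreeGroup.of).prod * ((p.2.map FreeGroup.of).prod)⁻¹}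

/-- Evaluation of a positive word in the co-presented group. -/
def toG {X : Type*} (Rel : Set (List X × List X)) (w : List X) :
    PresentedGroup (relators Rel) :=
  (w.map PresentedGroup.of).prod

/-- Equality in the semigroup presented by `Rel`: the congruence on the free monoid
generated by the defining relations. -/
def SGRel {X : Type*} (Rel : Set (List X × List X)) (w u : List X) : Prop :=
  conGen (fun a b : FreeMonoid X => ∃ p ∈ Rel,
      a = FreeMonoid.ofList p.1 ∧ b = FreeMonoid.ofList p.2)
    (FreeMonoid.ofList w) (FreeMonoid.ofList u)

/-- The word metric on the co-presented group with respect to `X ∪ X⁻¹`;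
its restriction to (the image of) the semigroup is the induced metric. -/
noncomputable def gdist {X : Type*} (Rel : Set (List X × List X))
    (g h : PresentedGroup (relators Rel)) : ℕ∞ :=
  sInf {n : ℕ∞ | ∃ l : List (X × Bool),
    (l.map (fun b => if b.2 then (PresentedGroup.of b.1 : PresentedGroup (relators Rel))
      else (PresentedGroup.of b.1)⁻¹)).prod = g⁻¹ * h ∧ (l.length : ℕ∞) = n}

/-- `W` and `U` are `k`-fellow-travellers with respect to the induced metric. -/
noncomputable def KFT {X : Type*} (Rel : Set (List X × List X)) (k : ℕ)
    (W U : List X) : Prop :=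
  ∀ n : ℕ, gdist Rel (toG Rel (W.take n)) (toG Rel (U.take n)) ≤ (k : ℕ∞)

/-- `L` is an automatic structure for the semigroup presented by `Rel`. -/
def IsAutomaticStructure {X : Type*} (Rel : Set (List X × List X))
    (L : Language X) : Prop :=
  L.IsRegular ∧ (∀ u : List X, ∃ w ∈ L, SGRel Rel w u) ∧
  ∀ x : Option X, Language.IsRegular
    {p : List (Option X × Option X) | ∃ W ∈ L, ∃ U ∈ L,
      SGRel Rel (W ++ x.toList) U ∧ p = pad W U}

/-- The semigroup presented by `Rel` is automatic. -/
def IsAutomatic {X : Type*} (Rel : Set (List X × List X)) : Prop :=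
  ∃ L : Language X, IsAutomaticStructure Rel L

/-- `𝓑`: the set of (nonempty) subwords of defining words. -/
def Bset {X : Type*} (Rel : Set (List X × List X)) : Set (List X) :=
  {W | W ≠ [] ∧ ∃ D ∈ defWords Rel, W <:+: D}

/-- A word over the alphabet `Φ = {φ_W : W ∈ 𝓑}`, recorded as its list of blocks. -/
def IsPhiWord {X : Type*} (Rel : Set (List X × List X)) (A : List (List X)) : Prop :=
  ∀ W ∈ A, W ∈ Bset Rel

/-- `A = φ_{W₁}⋯φ_{Wₙ}` is admissible: no product of consecutive blocks lies in `𝓑`. -/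
def Admissible {X : Type*} (Rel : Set (List X × List X)) (A : List (List X)) : Prop :=
  List.Chain' (fun u v => (u ++ v) ∉ Bset Rel) A

/-- The block preceding position `i` (`0`-based), with `W₀ = ε`. -/
def prevBlock {X : Type*} (A : List (List X)) (i : ℕ) : List X :=
  if i = 0 then [] else A.getD (i - 1) []

/-- The `i`-th (0-based) coordinate of the auxiliary vector `κ_A` equals `1`:
there are decompositions `W_{i-1} = q ++ p` and `W_{i+1} = s ++ t` with
`p ++ W_i ++ s` a defining word whose piece-length exceeds that of its complement. -/
def KappaOne {X : Type*} (Rel : Set (List X × List X)) (A : List (List X)) (i : ℕ) : Prop :=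
  ∃ p s q t : List X,
    prevBlock A i = q ++ p ∧ A.getD (i + 1) [] = s ++ t ∧
    (p ++ A.getD i [] ++ s) ∈ defWords Rel ∧
    ∃ C : List X, ((p ++ A.getD i [] ++ s, C) ∈ Rel ∨ (C, p ++ A.getD i [] ++ s) ∈ Rel) ∧
      pieceLength (defWords Rel) C < pieceLength (defWords Rel) (p ++ A.getD i [] ++ s)

/-- `A` is efficient: admissible and `κ_A` is the zero vector. -/
def Efficient {X : Type*} (Rel : Set (List X × List X)) (A : List (List X)) : Prop :=
  Admissible Rel A ∧ ∀ i < A.length, ¬ KappaOne Rel A i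

/-- Condition (†): each defining relation `L = R` satisfies `lp L + lp R ≥ 7`. -/
def Dagger {X : Type*} (Rel : Set (List X × List X)) : Prop :=
  ∀ p ∈ Rel, 7 ≤ pieceLength (defWords Rel) p.1 + pieceLength (defWords Rel) p.2

/-- The Piefer order: `A ≼ B` iff `κ_A = κ_B` or `κ_A` precedes `κ_B` in shortlex. -/
def PieferLe {X : Type*} (Rel : Set (List X × List X)) (A B : List (List X)) : Prop :=
  A.length < B.length ∨ (A.length = B.length ∧
    ((∀ i < B.length, (KappaOne Rel A i ↔ KappaOne Rel B i)) ∨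
      ∃ j < B.length, (∀ i < j, (KappaOne Rel A i ↔ KappaOne Rel B i)) ∧
        ¬ KappaOne Rel A j ∧ KappaOne Rel B j))

/-- `A` is left-greedy: no block extended by the first letter of the next block is in `𝓑`. -/
def LeftGreedy {X : Type*} (Rel : Set (List X × List X)) (A : List (List X)) : Prop :=
  List.Chain' (fun u v => ∀ x ∈ v.head?, (u ++ [x]) ∉ Bset Rel) A

/-- The word metric on the co-presented group with respect to the generating set
`𝓑 ∪ 𝓑⁻¹`; its restriction to the semigroup is the induced metric `d_Φ`. -/
noncomputable def dPhi {X : Type*} (Rel : Set (List X × List X))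
    (g h : PresentedGroup (relators Rel)) : ℕ∞ :=
  sInf {n : ℕ∞ | ∃ l : List (List X × Bool), (∀ b ∈ l, b.1 ∈ Bset Rel) ∧
    (l.map (fun b => if b.2 then toG Rel b.1 else (toG Rel b.1)⁻¹)).prod = g⁻¹ * h ∧
    (l.length : ℕ∞) = n}

/-- Let `A = φ_{W₁}⋯φ_{Wₙ}` be admissible. If `W_{ℓ-1} = W' ++ W''` with
`W'' ++ W_ℓ ∈ 𝓑` then `lp W'' ≤ 1`; symmetrically, if `W_ℓ = V' ++ V''` with
`W_{ℓ-1} ++ V' ∈ 𝓑` then `lp V' ≤ 1`.  (Indices here are 0-based: `i = ℓ - 1`.) -/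
theorem leftExt_not_too_long {X : Type*} (Rel : Set (List X × List X))
    (hK : K32 Rel)
    (A : List (List X)) (hA : IsPhiWord Rel A) (hAdm : Admissible Rel A)
    (i : ℕ) (hi : 1 ≤ i) (hin : i < A.length) :
    (∀ W' W'' : List X, A.getD (i - 1) [] = W' ++ W'' →
      (W'' ++ A.getD i []) ∈ Bset Rel → pieceLength (defWords Rel) W'' ≤ 1) ∧
    (∀ V' V'' : List X, A.getD i [] = V' ++ V'' →
      (A.getD (i - 1) [] ++ V') ∈ Bset Rel → pieceLength (defWords Rel) V' ≤ 1) := by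
  have hi1 : i - 1 < A.length := lt_of_le_of_lt (Nat.sub_le i 1) hin
  have hmem1 : A.getD (i - 1) [] ∈ A := by
    rw [List.getD_eq_getElem _ _ hi1]; exact List.getElem_mem _
  have hmem2 : A.getD i [] ∈ A := by
    rw [List.getD_eq_getElem _ _ hin]; exact List.getElem_mem _
  have hB1 := hA _ hmem1
  have hB2 := hA _ hmem2
  have hadm : (A.getD (i - 1) [] ++ A.getD i []) ∉ Bset Rel := by
    have h := List.isChain_iff_getElem.mp hAdm (i - 1) (by omega)
    have e : i - 1 + 1 = i := by omega
    simp only [List.get_eq_getElem, e] at h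
    rwa [List.getD_eq_getElem _ _ hi1, List.getD_eq_getElem _ _ hin]
  have hnil : pieceLength (defWords Rel) ([] : List X) ≤ 1 := by
    have h0 : pieceLength (defWords Rel) ([] : List X) ≤ (0 : ℕ∞) :=
      sInf_le ⟨[], by simp⟩
    exact le_trans h0 zero_le
  have hpieceLen : ∀ P : List X, IsPiece (defWords Rel) P →
      pieceLength (defWords Rel) P ≤ 1 := by
    intro P hP
    refine sInf_le ⟨[P], ?_⟩
    simp [hP]
  constructor
  · intro W' W'' hsplit hB
    rcases eq_or_ne W'' ([] : List X) with h | h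
    · rw [h]; exact hnil
    obtain ⟨hne1, D1, hD1, a, b, hab⟩ := hB1
    obtain ⟨-, D2, hD2, c, d, hcd⟩ := hB
    refine hpieceLen _ ⟨D1, hD1, D2, hD2, a ++ W', b, c, A.getD i [] ++ d, ?_, ?_, ?_⟩
    · rw [← hab, hsplit]; simp [List.append_assoc]
    · rw [← hcd]; simp [List.append_assoc]
    · by_contra hco
      push_neg at hco
      obtain ⟨h1, h2⟩ := hco
      refine hadm ⟨?_, D1, hD1, a, d, ?_⟩
      · simp only [ne_eq, List.append_eq_nil_iff]
        intro hh; exact hne1 hh.1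
      · rw [← hab, hsplit, h2]; simp [List.append_assoc]
  · intro V' V'' hsplit hB
    rcases eq_or_ne V' ([] : List X) with h | h
    · rw [h]; exact hnil
    obtain ⟨hne2, D1, hD1, a, b, hab⟩ := hB2
    obtain ⟨-, D2, hD2, c, d, hcd⟩ := hB
    refine hpieceLen _ ⟨D2, hD2, D1, hD1, c ++ A.getD (i - 1) [], d, a, V'' ++ b, ?_, ?_, ?_⟩
    · rw [← hcd]; simp [List.append_assoc]
    · rw [← hab, hsplit]; simp [List.append_assoc]
    · by_contra hco
      push_neg at hco
      obtain ⟨h1, h2⟩ := hco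
      refine hadm ⟨?_, D2, hD2, c, b, ?_⟩
      · simp only [ne_eq, List.append_eq_nil_iff]
        intro hh; exact hne2 hh.2
      · rw [← hcd, h2, hsplit]; simp [List.append_assoc]
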